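/- Let m ≥ 1 and set N = 2^m − 1. There exists an N×N matrix A whose entries are homogeneous linear forms (degree-1 homogeneous polynomials) in the m² variables x_{ij}, 1 ≤ i, j ≤ m, over ℂ, such that tr(A^m) = per_m, where per_m = Σ_{σ ∈ S_m} Π_{i=1}^m x_{i,σ(i)} is the m×m permanent polynomial. (Grenet's construction yields pc(per_m) ≤ 2^m − 1.) -/

import Mathlib

open Matrix
open Finset MvPolynomial

namespace Grenet

variable {m : ℕ}

/-- initial segment of `Fin m` of length `t` -/
def seg (m t : ℕ) : Finset (Fin m) := Finset.univ.filter fun s => (s : ℕ) < t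

lemma mem_seg {t : ℕ} {s : Fin m} : s ∈ seg m t ↔ (s : ℕ) < t := by
  simp [seg]

lemma seg_zero : seg m 0 = ∅ := by ext s; simp [mem_seg]

lemma seg_card {t : ℕ} (ht : t ≤ m) : (seg m t).card = t := by
  have : seg m t = (Finset.univ : Finset (Fin t)).map
      (Fin.castLEEmb ht) := by
    ext s
    simp only [mem_seg, Finset.mem_map, Finset.mem_univ, true_and]
    constructor
    · intro hs; exact ⟨⟨(s : ℕ), hs⟩, rfl⟩
    · rintro ⟨a, rfl⟩; exact a.isLt
  rw [this, Finset.card_map, Finset.card_univ, Fintype.card_fin]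

lemma seg_succ {t : ℕ} (ht : t < m) : seg m (t + 1) = insert ⟨t, ht⟩ (seg m t) := by
  ext s
  simp only [mem_seg, Finset.mem_insert]
  constructor
  · intro hs
    rcases Nat.lt_succ_iff_lt_or_eq.mp hs with h | h
    · exact Or.inr h
    · exact Or.inl (Fin.ext h)
  · rintro (rfl | hs)
    · simp
    · exact Nat.lt_succ_of_lt hs

lemma seg_mono {t t' : ℕ} (h : t ≤ t') : seg m t ⊆ seg m t' := fun s hs =>
  mem_seg.mpr (lt_of_lt_of_le (mem_seg.mp hs) h)

lemma seg_self : seg m m = Finset.univ := by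
  ext s; simp [mem_seg, s.isLt]

lemma not_mem_seg {t : ℕ} (ht : t < m) : (⟨t, ht⟩ : Fin m) ∉ seg m t := by
  simp [mem_seg]

/-- image of the initial segment under a map -/
def img (g : Fin m → Fin m) (t : ℕ) : Finset (Fin m) := (seg m t).image g

lemma img_zero (g : Fin m → Fin m) : img g 0 = ∅ := by simp [img, seg_zero]

lemma img_card {g : Fin m → Fin m} (hg : Function.Injective g) {t : ℕ} (ht : t ≤ m) :
    (img g t).card = t := by
  rw [img, Finset.card_image_of_injective _ hg, seg_card ht]

lemma img_mono (g : Fin m → Fin m) {t t' : ℕ} (h : t ≤ t') : img g t ⊆ img g t' :=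
  Finset.image_subset_image (seg_mono h)

lemma img_succ (g : Fin m → Fin m) {t : ℕ} (ht : t < m) :
    img g (t + 1) = insert (g ⟨t, ht⟩) (img g t) := by
  rw [img, seg_succ ht, Finset.image_insert]; rfl

lemma not_mem_img {g : Fin m → Fin m} (hg : Function.Injective g) {t : ℕ} (ht : t < m) :
    g ⟨t, ht⟩ ∉ img g t := by
  simp only [img, Finset.mem_image, not_exists]
  rintro a ⟨ha, hag⟩
  exact not_mem_seg ht (by rwa [hg hag] at ha)

lemma img_diff {g : Fin m → Fin m} (hg : Function.Injective g) {t : ℕ} (ht : t < m) :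
    img g (t + 1) \ img g t = {g ⟨t, ht⟩} := by
  ext a
  simp only [img_succ g ht, Finset.mem_sdiff, Finset.mem_insert, Finset.mem_singleton]
  constructor
  · rintro ⟨h1 | h1, h2⟩
    · exact h1
    · exact absurd h1 h2
  · rintro rfl
    exact ⟨Or.inl rfl, not_mem_img hg ht⟩

lemma img_univ {g : Fin m → Fin m} (hg : Function.Injective g) :
    img g m = Finset.univ := by
  rw [← Finset.card_eq_iff_eq_univ, img_card hg le_rfl, Fintype.card_fin]

lemma img_compl {g : Fin m → Fin m} (hg : Function.Injective g) {t : ℕ} (ht : t + 1 = m) :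
    (img g t)ᶜ = {g ⟨t, by omega⟩} := by
  have h1 : img g (t + 1) = Finset.univ := ht ▸ img_univ hg
  rw [img_succ g (by omega)] at h1
  ext a
  simp only [Finset.mem_compl, Finset.mem_singleton]
  constructor
  · intro ha
    have : a ∈ insert (g ⟨t, by omega⟩) (img g t) := h1 ▸ Finset.mem_univ a
    rcases Finset.mem_insert.mp this with h | h
    · exact h
    · exact absurd h ha
  · rintro rfl; exact not_mem_img hg (by omega)


/-- vertices: proper-cardinality subsets of `Fin m` -/
abbrev Vtx (m : ℕ) := {S : Finset (Fin m) // S.card < m}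

lemma card_Vtx (m : ℕ) (hm : 0 < m) : Fintype.card (Vtx m) = 2 ^ m - 1 := by
  have e1 : Vtx m ≃ {S : Finset (Fin m) // ¬ S = Finset.univ} := by
    apply Equiv.subtypeEquivRight
    intro S
    have h1 : S.card ≤ m := by
      simpa using Finset.card_le_univ S
    constructor
    · intro h hS
      rw [hS] at h
      simp at h
    · intro h
      rcases lt_or_eq_of_le h1 with h2 | h2
      · exact h2
      · exact absurd ((Finset.card_eq_iff_eq_univ S).mp (by simpa using h2)) h
  rw [Fintype.card_congr e1, Fintype.card_subtype_compl, Fintype.card_finset,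
    Fintype.card_fin, Fintype.card_subtype_eq (Finset.univ : Finset (Fin m))]

variable [NeZero m]

/-- the row index associated to a vertex -/
def row (S : Vtx m) : Fin m := ⟨S.1.card, S.2⟩

/-- Grenet's matrix -/
noncomputable def B (m : ℕ) [NeZero m] :
    Matrix (Vtx m) (Vtx m) (MvPolynomial (Fin m × Fin m) ℂ) := fun S T =>
  (if S.1 ⊆ T.1 ∧ T.1.card = S.1.card + 1 then ∑ j ∈ T.1 \ S.1, X (row S, j) else 0)
  + (if S.1.card + 1 = m ∧ T.1 = ∅ then C (m : ℂ)⁻¹ * ∑ j ∈ S.1ᶜ, X (row S, j) else 0)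

lemma B_homogeneous (S T : Vtx m) : (B m S T).IsHomogeneous 1 := by
  apply MvPolynomial.IsHomogeneous.add
  · split_ifs
    · exact MvPolynomial.IsHomogeneous.sum _ _ _ fun j _ => isHomogeneous_X _ _
    · exact isHomogeneous_zero _ _ _
  · split_ifs
    · have h2 : (∑ j ∈ S.1ᶜ, (X (row S, j) : MvPolynomial (Fin m × Fin m) ℂ)).IsHomogeneous 1 :=
        MvPolynomial.IsHomogeneous.sum _ _ _ fun j _ => isHomogeneous_X _ _
      simpa using (isHomogeneous_C (Fin m × Fin m) ((m : ℂ)⁻¹)).mul h2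
    · exact isHomogeneous_zero _ _ _

/-- the edge relation -/
def Edge (S T : Vtx m) : Prop :=
  (S.1 ⊆ T.1 ∧ T.1.card = S.1.card + 1) ∨ (S.1.card + 1 = m ∧ T.1 = ∅)

lemma B_eq_zero {S T : Vtx m} (h : ¬ Edge S T) : B m S T = 0 := by
  rw [Edge, not_or] at h
  rw [B, if_neg h.1, if_neg h.2, add_zero]


lemma val_add_one (t : Fin m) : ((t + 1 : Fin m) : ℕ) = ((t : ℕ) + 1) % m := by
  rw [Fin.val_add, Fin.val_one']
  conv_lhs => rw [Nat.add_mod]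
  conv_rhs => rw [Nat.add_mod]
  simp [Nat.mod_mod_of_dvd, Nat.mod_self, Nat.mod_mod]

/-- the cyclic walk associated to `(g, w)`: position `i` is the image under `g` of the
initial segment of length `i - (w+1)`. -/
def walk (g : Fin m → Fin m) (w : Fin m) : Fin m → Vtx m := fun i =>
  ⟨img g ((i - (w + 1) : Fin m) : ℕ),
    lt_of_le_of_lt (le_trans Finset.card_image_le (le_of_eq (seg_card (le_of_lt (Fin.is_lt _)))))
      (Fin.is_lt _)⟩

lemma walk_coe (g : Fin m → Fin m) (w i : Fin m) :
    (walk g w i).1 = img g ((i - (w + 1) : Fin m) : ℕ) := rfl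

lemma walk_add (g : Fin m → Fin m) (w t : Fin m) :
    (walk g w ((w + 1) + t)).1 = img g (t : ℕ) := by
  rw [walk_coe, add_sub_cancel_left]

lemma walk_card (σ : Equiv.Perm (Fin m)) (w i : Fin m) :
    (walk ⇑σ w i).1.card = ((i - (w + 1) : Fin m) : ℕ) :=
  img_card σ.injective (le_of_lt (Fin.is_lt _))

lemma row_walk (σ : Equiv.Perm (Fin m)) (w t : Fin m) :
    row (walk ⇑σ w ((w + 1) + t)) = t := by
  apply Fin.ext
  show (walk ⇑σ w ((w + 1) + t)).1.card = (t : ℕ)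
  rw [walk_card, add_sub_cancel_left]

lemma B_walk (σ : Equiv.Perm (Fin m)) (w t : Fin m) :
    B m (walk ⇑σ w ((w + 1) + t)) (walk ⇑σ w ((w + 1) + t + 1)) =
      (if (t : ℕ) + 1 = m then C (m : ℂ)⁻¹ else 1) * X (t, σ t) := by
  have hS : (walk ⇑σ w ((w + 1) + t)).1 = img ⇑σ (t : ℕ) := walk_add _ _ _
  have hT : (walk ⇑σ w ((w + 1) + t + 1)).1 = img ⇑σ ((t + 1 : Fin m) : ℕ) := by
    rw [add_assoc]; exact walk_add _ _ _
  have hScard : (walk ⇑σ w ((w + 1) + t)).1.card = (t : ℕ) := by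
    rw [hS, img_card σ.injective (le_of_lt t.isLt)]
  have hrow : row (walk ⇑σ w ((w + 1) + t)) = t := row_walk σ w t
  by_cases h : (t : ℕ) + 1 = m
  · have hT0 : (walk ⇑σ w ((w + 1) + t + 1)).1 = ∅ := by
      rw [hT, val_add_one, h, Nat.mod_self, img_zero]
    have hc2 : (walk ⇑σ w ((w + 1) + t)).1.card + 1 = m ∧ (walk ⇑σ w ((w + 1) + t + 1)).1 = ∅ :=
      ⟨by rw [hScard]; exact h, hT0⟩
    have hc1 : ¬ ((walk ⇑σ w ((w + 1) + t)).1 ⊆ (walk ⇑σ w ((w + 1) + t + 1)).1 ∧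
        (walk ⇑σ w ((w + 1) + t + 1)).1.card = (walk ⇑σ w ((w + 1) + t)).1.card + 1) := by
      rintro ⟨-, hcard⟩
      rw [hT0, hScard] at hcard
      simp at hcard
    rw [B, if_neg hc1, if_pos hc2, hrow]
    have hcompl : ((walk ⇑σ w ((w + 1) + t)).1)ᶜ = {σ t} := by
      rw [hS]
      have := img_compl (g := ⇑σ) σ.injective (t := (t : ℕ)) h
      rwa [Fin.eta] at this
    rw [hcompl, Finset.sum_singleton, if_pos h, zero_add]
  · have hlt : (t : ℕ) + 1 < m := lt_of_le_of_ne t.isLt h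
    have hT1 : (walk ⇑σ w ((w + 1) + t + 1)).1 = img ⇑σ ((t : ℕ) + 1) := by
      rw [hT, val_add_one, Nat.mod_eq_of_lt hlt]
    have hc1 : (walk ⇑σ w ((w + 1) + t)).1 ⊆ (walk ⇑σ w ((w + 1) + t + 1)).1 ∧
        (walk ⇑σ w ((w + 1) + t + 1)).1.card = (walk ⇑σ w ((w + 1) + t)).1.card + 1 := by
      refine ⟨?_, ?_⟩
      · rw [hS, hT1]; exact img_mono _ (Nat.le_succ _)
      · rw [hS, hT1, img_card σ.injective (le_of_lt hlt), img_card σ.injective (le_of_lt t.isLt)]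
    have hc2 : ¬ ((walk ⇑σ w ((w + 1) + t)).1.card + 1 = m ∧
        (walk ⇑σ w ((w + 1) + t + 1)).1 = ∅) := by
      rintro ⟨hcard, -⟩
      rw [hScard] at hcard
      exact h hcard
    rw [B, if_pos hc1, if_neg hc2, hrow]
    have hd : (walk ⇑σ w ((w + 1) + t + 1)).1 \ (walk ⇑σ w ((w + 1) + t)).1 = {σ t} := by
      rw [hS, hT1]
      have := img_diff (g := ⇑σ) σ.injective (t := (t : ℕ)) (by omega)
      rwa [Fin.eta] at this
    rw [hd, Finset.sum_singleton, if_neg h, one_mul, add_zero]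

lemma walk_edge (σ : Equiv.Perm (Fin m)) (w i : Fin m) :
    Edge (walk ⇑σ w i) (walk ⇑σ w (i + 1)) := by
  have hi : (w + 1) + (i - (w + 1)) = i := by
    rw [add_comm, sub_add_cancel]
  set t := i - (w + 1) with hti
  rw [← hi]
  have hS : (walk ⇑σ w ((w + 1) + t)).1 = img ⇑σ (t : ℕ) := walk_add _ _ _
  have hT : (walk ⇑σ w ((w + 1) + t + 1)).1 = img ⇑σ ((t + 1 : Fin m) : ℕ) := by
    rw [add_assoc]; exact walk_add _ _ _
  have hScard : (walk ⇑σ w ((w + 1) + t)).1.card = (t : ℕ) := by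
    rw [hS, img_card σ.injective (le_of_lt t.isLt)]
  by_cases h : (t : ℕ) + 1 = m
  · refine Or.inr ⟨by rw [hScard]; exact h, ?_⟩
    rw [hT, val_add_one, h, Nat.mod_self, img_zero]
  · have hlt : (t : ℕ) + 1 < m := lt_of_le_of_ne t.isLt h
    have hT1 : (walk ⇑σ w ((w + 1) + t + 1)).1 = img ⇑σ ((t : ℕ) + 1) := by
      rw [hT, val_add_one, Nat.mod_eq_of_lt hlt]
    refine Or.inl ⟨?_, ?_⟩
    · rw [hS, hT1]; exact img_mono _ (Nat.le_succ _)
    · rw [hS, hT1, img_card σ.injective (le_of_lt hlt), img_card σ.injective (le_of_lt t.isLt)]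

lemma prod_walk (σ : Equiv.Perm (Fin m)) (w : Fin m) :
    ∏ i : Fin m, B m (walk ⇑σ w i) (walk ⇑σ w (i + 1)) =
      C (m : ℂ)⁻¹ * ∏ t : Fin m, X (t, σ t) := by
  rw [← Equiv.prod_comp (Equiv.addLeft (w + 1))
    (fun i => B m (walk ⇑σ w i) (walk ⇑σ w (i + 1)))]
  have hterm : ∀ t : Fin m,
      B m (walk ⇑σ w (Equiv.addLeft (w + 1) t)) (walk ⇑σ w (Equiv.addLeft (w + 1) t + 1)) =
      (if (t : ℕ) + 1 = m then C (m : ℂ)⁻¹ else 1) * X (t, σ t) := fun t => B_walk σ w t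
  rw [Finset.prod_congr rfl fun t _ => hterm t, Finset.prod_mul_distrib]
  congr 1
  have hiff : ∀ t : Fin m, ((t : ℕ) + 1 = m) ↔ t = ⟨m - 1, by have := NeZero.pos m; omega⟩ := by
    intro t
    rw [Fin.ext_iff]
    have := t.isLt
    constructor <;> intro h <;> simp at h ⊢ <;> omega
  rw [Finset.prod_congr rfl fun t _ => if_congr (hiff t) rfl rfl,
    Finset.prod_ite_eq' Finset.univ _ (fun _ => C (m : ℂ)⁻¹), if_pos (Finset.mem_univ _)]

lemma walk_inj {σ σ' : Equiv.Perm (Fin m)} {w w' : Fin m}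
    (h : walk ⇑σ w = walk ⇑σ' w') : σ = σ' ∧ w = w' := by
  have hw : w = w' := by
    have h0 : ((w + 1 - (w + 1) : Fin m) : ℕ) = ((w + 1 - (w' + 1) : Fin m) : ℕ) := by
      rw [← walk_card σ w (w + 1), ← walk_card σ' w' (w + 1), h]
    rw [sub_self] at h0
    have : (w + 1 - (w' + 1) : Fin m) = 0 := Fin.ext h0.symm
    have := sub_eq_zero.mp this
    exact add_right_cancel this
  subst hw
  have himg : ∀ u : ℕ, u ≤ m → img ⇑σ u = img ⇑σ' u := by
    intro u hu
    rcases lt_or_eq_of_le hu with hlt | rfl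
    · have := congrFun h ((w + 1) + (⟨u, hlt⟩ : Fin m))
      have h2 := congrArg Subtype.val this
      rwa [walk_add, walk_add] at h2
    · rw [img_univ σ.injective, img_univ σ'.injective]
  refine ⟨?_, rfl⟩
  apply Equiv.ext
  intro t
  have ht : (t : ℕ) < m := t.isLt
  by_cases htm : (t : ℕ) + 1 = m
  · have h1 : (img ⇑σ (t : ℕ))ᶜ = {σ t} := by
      have := img_compl (g := ⇑σ) σ.injective htm; rwa [Fin.eta] at this
    have h2 : (img ⇑σ' (t : ℕ))ᶜ = {σ' t} := by
      have := img_compl (g := ⇑σ') σ'.injective htm; rwa [Fin.eta] at this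
    have h3 : ({σ t} : Finset (Fin m)) = {σ' t} := by
      rw [← h1, ← h2, himg (t : ℕ) (le_of_lt ht)]
    exact Finset.singleton_inj.mp h3
  · have h1 : img ⇑σ ((t : ℕ) + 1) \ img ⇑σ (t : ℕ) = {σ t} := by
      have := img_diff (g := ⇑σ) σ.injective ht; rwa [Fin.eta] at this
    have h2 : img ⇑σ' ((t : ℕ) + 1) \ img ⇑σ' (t : ℕ) = {σ' t} := by
      have := img_diff (g := ⇑σ') σ'.injective ht; rwa [Fin.eta] at this
    have h3 : ({σ t} : Finset (Fin m)) = {σ' t} := by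
      rw [← h1, ← h2, himg ((t : ℕ) + 1) (by omega), himg (t : ℕ) (le_of_lt ht)]
    exact Finset.singleton_inj.mp h3

open Fin.CommRing in
lemma exists_walk (f : Fin m → Vtx m) (hf : ∀ i, Edge (f i) (f (i + 1))) :
    ∃ (σ : Equiv.Perm (Fin m)) (w : Fin m), walk ⇑σ w = f := by
  classical
  -- Step 1: there is a "wrap" position
  have hwrap : ∃ w : Fin m, (f (w + 1)).1 = ∅ := by
    by_contra hno
    push_neg at hno
    have hall : ∀ i : Fin m, (f i).1 ≠ ∅ := by
      intro i
      have := hno (i - 1)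
      rw [sub_add_cancel] at this
      exact Finset.nonempty_iff_ne_empty.mp this
    have hstep : ∀ i : Fin m, (f (i + 1)).1.card = (f i).1.card + 1 := by
      intro i
      rcases hf i with h | h
      · exact h.2
      · exact absurd h.2 (hall (i + 1))
    have hcard : ∀ k : ℕ, k < m → (f ((k : ℕ) : Fin m)).1.card = (f 0).1.card + k := by
      intro k
      induction k with
      | zero => intro _; simp
      | succ k ih =>
        intro hk
        have hcast : ((k + 1 : ℕ) : Fin m) = ((k : ℕ) : Fin m) + 1 := by push_cast; ring
        rw [hcast, hstep, ih (by omega)]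
        omega
    have h1 : 0 < (f 0).1.card := Finset.card_pos.mpr
      (Finset.nonempty_iff_ne_empty.mpr (hall 0))
    have h2 := hcard (m - 1) (by have := NeZero.pos m; omega)
    have h3 := (f ((m - 1 : ℕ) : Fin m)).2
    omega
  obtain ⟨w, hw⟩ := hwrap
  let F : ℕ → Finset (Fin m) := fun t => (f ((w + 1) + ((t : ℕ) : Fin m))).1
  have hFdef : ∀ t : ℕ, F t = (f ((w + 1) + ((t : ℕ) : Fin m))).1 := fun _ => rfl
  have hFedge : ∀ t : ℕ, Edge (f ((w + 1) + ((t : ℕ) : Fin m)))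
      (f ((w + 1) + (((t + 1 : ℕ)) : Fin m))) := by
    intro t
    have hcast : ((t + 1 : ℕ) : Fin m) = ((t : ℕ) : Fin m) + 1 := by push_cast; ring
    rw [hcast, ← add_assoc]
    exact hf _
  have hFstep : ∀ t : ℕ, (F t ⊆ F (t + 1) ∧ (F (t + 1)).card = (F t).card + 1) ∨
      ((F t).card + 1 = m ∧ F (t + 1) = ∅) := by
    intro t
    rcases hFedge t with he | he
    · exact Or.inl he
    · exact Or.inr he
  -- Step 2: cardinalities along the walk
  have hcard : ∀ t : ℕ, t < m → (F t).card = t := by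
    intro t
    induction t with
    | zero =>
      intro _
      rw [hFdef]
      simp [hw]
    | succ t ih =>
      intro ht
      rcases hFstep t with h | h
      · rw [h.2, ih (by omega)]
      · exfalso
        have h1 := h.1
        rw [ih (by omega)] at h1
        omega
  -- Step 3: the added elements
  have hD : ∀ t : Fin m, ∃ a : Fin m,
      (if (t : ℕ) + 1 < m then F ((t : ℕ) + 1) \ F (t : ℕ) else (F (t : ℕ))ᶜ) = {a} := by
    intro t
    rw [← Finset.card_eq_one]
    by_cases h : (t : ℕ) + 1 < m
    · rw [if_pos h]
      rcases hFstep (t : ℕ) with he | he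
      · rw [Finset.card_sdiff_of_subset he.1, he.2, hcard (t : ℕ) t.isLt]
        omega
      · exfalso
        have h1 := he.1
        rw [hcard (t : ℕ) t.isLt] at h1
        omega
    · rw [if_neg h, Finset.card_compl, hcard (t : ℕ) t.isLt, Fintype.card_fin]
      have := t.isLt
      omega
  choose g hg using hD
  -- Step 4: F agrees with img g
  have himg : ∀ t : ℕ, t < m → F t = img g t := by
    intro t
    induction t with
    | zero =>
      intro _
      rw [hFdef, img_zero]
      simpa using hw
    | succ t ih =>
      intro ht
      have ht' : t < m := by omega
      have hsub : F t ⊆ F (t + 1) ∧ (F (t + 1)).card = (F t).card + 1 := by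
        rcases hFstep t with he | he
        · exact he
        · exfalso
          have h1 := he.1
          rw [hcard t ht'] at h1
          omega
      have hgt : F (t + 1) \ F t = {g ⟨t, ht'⟩} := by
        have := hg ⟨t, ht'⟩
        rwa [if_pos (by simpa using ht)] at this
      have hun : F (t + 1) = F t ∪ (F (t + 1) \ F t) := (Finset.union_sdiff_of_subset hsub.1).symm
      rw [hun, hgt, ih ht', img_succ g ht', Finset.union_comm]
      exact (Finset.insert_eq _ _).symm
  -- Step 5: g is injective
  have hkey : ∀ a b : Fin m, (a : ℕ) < (b : ℕ) → g a ≠ g b := by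
    intro a b hab heq
    have hga : g a ∈ img g ((a : ℕ) + 1) := by
      apply Finset.mem_image_of_mem
      exact mem_seg.mpr (Nat.lt_succ_self _)
    have hga' : g a ∈ img g (b : ℕ) := img_mono g (by omega) hga
    have hFb : g a ∈ F (b : ℕ) := by rwa [himg (b : ℕ) b.isLt]
    have hgb : g b ∉ F (b : ℕ) := by
      have hgbs := hg b
      by_cases h : (b : ℕ) + 1 < m
      · rw [if_pos h] at hgbs
        intro hmem
        have hin : g b ∈ F ((b : ℕ) + 1) \ F (b : ℕ) := by
          rw [hgbs]; exact Finset.mem_singleton_self _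
        exact (Finset.mem_sdiff.mp hin).2 hmem
      · rw [if_neg h] at hgbs
        intro hmem
        have hin : g b ∈ (F (b : ℕ))ᶜ := by
          rw [hgbs]; exact Finset.mem_singleton_self _
        exact (Finset.mem_compl.mp hin) hmem
    rw [heq] at hFb
    exact hgb hFb
  have hginj : Function.Injective g := by
    intro a b hab
    by_contra hne
    rcases lt_trichotomy (a : ℕ) (b : ℕ) with h | h | h
    · exact hkey a b h hab
    · exact hne (Fin.ext h)
    · exact hkey b a h hab.symm
  refine ⟨Equiv.ofBijective g (Finite.injective_iff_bijective.mp hginj), w, ?_⟩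
  funext i
  apply Subtype.ext
  show img g ((i - (w + 1) : Fin m) : ℕ) = (f i).1
  have hi : (w + 1) + (i - (w + 1)) = i := by rw [add_comm, sub_add_cancel]
  have hcast : (((i - (w + 1) : Fin m) : ℕ) : Fin m) = i - (w + 1) := Fin.cast_val_eq_self _
  have hfi : (f i).1 = F ((i - (w + 1) : Fin m) : ℕ) := by
    rw [hFdef, hcast, hi]
  rw [hfi, himg _ (Fin.is_lt _)]

section TracePow

variable {α : Type*} [Fintype α] [DecidableEq α] {R : Type*} [CommRing R]

/-- vertex sequence of a path from `u` to `v` with intermediate vertices `g` -/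
def pathFun {k : ℕ} (u v : α) (g : Fin k → α) : Fin (k + 2) → α :=
  Fin.cons u (Fin.snoc g v)

lemma pathFun_cons {k : ℕ} (u v w : α) (g : Fin k → α) :
    pathFun u v (Fin.cons w g) = Fin.cons u (pathFun w v g) := by
  unfold pathFun
  rw [← Fin.cons_snoc_eq_snoc_cons]

lemma consEquiv_apply' {k : ℕ} (w : α) (g : Fin k → α) :
    (Fin.consEquiv fun _ : Fin (k + 1) => α) (w, g) = Fin.cons w g := rfl

lemma pow_apply_walk (M : Matrix α α R) : ∀ (k : ℕ) (u v : α),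
    (M ^ (k + 1)) u v = ∑ g : Fin k → α,
      ∏ i : Fin (k + 1), M (pathFun u v g i.castSucc) (pathFun u v g i.succ) := by
  intro k
  induction k with
  | zero =>
    intro u v
    rw [pow_one, Fintype.sum_unique, Fin.prod_univ_one]
    simp [pathFun, Fin.snoc]
  | succ k ih =>
    intro u v
    rw [pow_succ' M (k + 1), Matrix.mul_apply]
    have hterm : ∀ w : α, M u w * (M ^ (k + 1)) w v = ∑ g : Fin k → α,
        M u w * ∏ i : Fin (k + 1), M (pathFun w v g i.castSucc) (pathFun w v g i.succ) := by
      intro w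
      rw [ih w v, Finset.mul_sum]
    rw [Finset.sum_congr rfl fun w _ => hterm w]
    conv_rhs => rw [← Equiv.sum_comp (Fin.consEquiv fun _ : Fin (k + 1) => α)
      (fun g : Fin (k + 1) → α => ∏ i : Fin (k + 2),
        M (pathFun u v g i.castSucc) (pathFun u v g i.succ))]
    rw [Fintype.sum_prod_type]
    apply Finset.sum_congr rfl
    intro w _
    apply Finset.sum_congr rfl
    intro g _
    rw [consEquiv_apply']
    rw [pathFun_cons]
    conv_rhs => rw [Fin.prod_univ_succ]
    congr 1

lemma trace_pow_walk (M : Matrix α α R) (k : ℕ) :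
    (M ^ (k + 1)).trace =
      ∑ f : Fin (k + 1) → α, ∏ i : Fin (k + 1), M (f i) (f (i + 1)) := by
  rw [← Equiv.sum_comp (Fin.consEquiv fun _ : Fin (k + 1) => α)
    (fun f : Fin (k + 1) → α => ∏ i : Fin (k + 1), M (f i) (f (i + 1))),
    Fintype.sum_prod_type]
  rw [Matrix.trace]
  apply Finset.sum_congr rfl
  intro u _
  simp only [Fin.consEquiv_apply]
  rw [Matrix.diag, pow_apply_walk M k u u]
  apply Finset.sum_congr rfl
  intro g _
  apply Finset.prod_congr rfl
  intro i _
  congr 1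
  · induction i using Fin.cases with
    | zero => simp [pathFun]
    | succ j =>
      simp only [pathFun, ← Fin.succ_castSucc, Fin.cons_succ, Fin.snoc_castSucc]
  · simp only [pathFun]
    induction i using Fin.lastCases with
    | last => rw [Fin.cons_succ, Fin.snoc_last, Fin.last_add_one, Fin.cons_zero]
    | cast j => rw [Fin.cons_succ, Fin.snoc_castSucc, Fin.coeSucc_eq_succ, Fin.cons_succ]

lemma trace_pow_walk' (M : Matrix α α R) (n : ℕ) [NeZero n] :
    (M ^ n).trace = ∑ f : Fin n → α, ∏ i : Fin n, M (f i) (f (i + 1)) := by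
  obtain ⟨k, rfl⟩ : ∃ k, n = k + 1 := ⟨n - 1, by have := NeZero.pos n; omega⟩
  exact trace_pow_walk M k

end TracePow

end Grenet

/-- Grenet's construction: there is a `(2^m - 1) × (2^m - 1)` matrix `A` whose
entries are homogeneous linear forms in the `m²` variables `x_{ij}` such that
`tr(A^m)` is the `m × m` permanent polynomial. Hence `pc(per_m) ≤ 2^m - 1`. -/
theorem grenet_power_trace_permanent (m : ℕ) (hm : 1 ≤ m) :
    ∃ A : Matrix (Fin (2 ^ m - 1)) (Fin (2 ^ m - 1)) (MvPolynomial (Fin m × Fin m) ℂ),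
      (∀ i j, (A i j).IsHomogeneous 1) ∧
      (A ^ m).trace =
        ∑ σ : Equiv.Perm (Fin m), ∏ i : Fin m, MvPolynomial.X (i, σ i) := by
  classical
  haveI : NeZero m := ⟨by omega⟩
  have e : Fin (2 ^ m - 1) ≃ Grenet.Vtx m :=
    (Fintype.equivFinOfCardEq (Grenet.card_Vtx m hm)).symm
  refine ⟨(Grenet.B m).submatrix ⇑e ⇑e, fun i j => Grenet.B_homogeneous _ _, ?_⟩
  have hpow : ((Grenet.B m).submatrix ⇑e ⇑e) ^ m = ((Grenet.B m) ^ m).submatrix ⇑e ⇑e := by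
    have h := map_pow (Matrix.reindexAlgEquiv (MvPolynomial (Fin m × Fin m) ℂ)
      (MvPolynomial (Fin m × Fin m) ℂ) e.symm) (Grenet.B m) m
    simp only [Matrix.reindexAlgEquiv_apply, Matrix.reindex_apply, Equiv.symm_symm] at h
    exact h.symm
  rw [hpow]
  have htr : (((Grenet.B m) ^ m).submatrix ⇑e ⇑e).trace = ((Grenet.B m) ^ m).trace := by
    rw [Matrix.trace, Matrix.trace]
    exact Equiv.sum_comp e fun v => ((Grenet.B m) ^ m) v v
  rw [htr, Grenet.trace_pow_walk' (Grenet.B m) m]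
  have hzero : ∀ f : Fin m → Grenet.Vtx m,
      (∏ i : Fin m, Grenet.B m (f i) (f (i + 1))) ≠ 0 →
        ∀ i, Grenet.Edge (f i) (f (i + 1)) := by
    intro f hne
    by_contra hedge
    push_neg at hedge
    obtain ⟨i, hi⟩ := hedge
    exact hne (Finset.prod_eq_zero (Finset.mem_univ i) (Grenet.B_eq_zero hi))
  rw [← Finset.sum_filter_of_ne (fun f _ h => hzero f h)]
  rw [← Finset.sum_bij (fun (p : Equiv.Perm (Fin m) × Fin m) _ => Grenet.walk ⇑p.1 p.2)
      (fun p _ => Finset.mem_filter.mpr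
        ⟨Finset.mem_univ _, fun i => Grenet.walk_edge p.1 p.2 i⟩)
      (fun p1 _ p2 _ h => by
        obtain ⟨h1, h2⟩ := Grenet.walk_inj h
        exact Prod.ext h1 h2)
      (fun f hf => by
        obtain ⟨σ, w, hw⟩ := Grenet.exists_walk f (Finset.mem_filter.mp hf).2
        exact ⟨(σ, w), Finset.mem_univ _, hw⟩)
      (fun p _ => (Grenet.prod_walk p.1 p.2).symm)]
  rw [Fintype.sum_prod_type]
  apply Finset.sum_congr rfl
  intro σ _
  have h1 : ∑ _y : Fin m, (MvPolynomial.C (m : ℂ)⁻¹ *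
      ∏ t : Fin m, MvPolynomial.X (t, σ t) : MvPolynomial (Fin m × Fin m) ℂ) =
      ∏ i : Fin m, MvPolynomial.X (i, σ i) := by
    rw [Finset.sum_const, Finset.card_univ, Fintype.card_fin, nsmul_eq_mul,
      ← map_natCast (MvPolynomial.C : ℂ →+* MvPolynomial (Fin m × Fin m) ℂ) m,
      ← mul_assoc, ← MvPolynomial.C_mul,
      mul_inv_cancel₀ (Nat.cast_ne_zero.mpr (by omega : m ≠ 0)), MvPolynomial.C_1, one_mul]
  exact h1
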